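/- Let (R,m,k) be a commutative Noetherian local ring of positive depth, and let X be a resolving subcategory of mod R containing the Auslander transpose Tr k of the residue field. Then for every finitely generated R-module L of finite length, Tr L belongs to X. -/

import Mathlib

open CategoryTheory IsLocalRing

universe u

section Prelim

variable (R : Type u) [CommRing R]

/-- The depth of a module over a local ring: the supremum of the lengths of
(weakly) regular sequences on `M` consisting of elements of the maximal ideal. -/
noncomputable def mdepth [IsLocalRing R] (M : Type u) [AddCommGroup M] [Module R M] : ℕ∞ :=
  sSup {n : ℕ∞ | ∃ rs : List R, (rs.length : ℕ∞) = n ∧ (∀ r ∈ rs, r ∈ maximalIdeal R) ∧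
    RingTheory.Sequence.IsWeaklyRegular M rs}

/-- A short exact sequence `0 → L → M → N → 0` of `R`-modules. -/
def SES (L M N : ModuleCat.{u} R) : Prop :=
  ∃ (f : L →ₗ[R] M) (g : M →ₗ[R] N),
    Function.Injective f ∧ Function.Surjective g ∧ LinearMap.ker g = LinearMap.range f

/-- `N` is a direct summand of `M`. -/
def IsSummand (N M : ModuleCat.{u} R) : Prop :=
  ∃ (i : N →ₗ[R] M) (p : M →ₗ[R] N), p.comp i = LinearMap.id

/-- `N` is a (minimal) first syzygy of `M`: the kernel of a minimal free cover of `M`. -/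
def IsSyzygy (M N : ModuleCat.{u} R) : Prop :=
  ∃ (n : ℕ) (f : (Fin n → R) →ₗ[R] M), Function.Surjective f ∧
    LinearMap.ker f ≤ ((⊥ : Ideal R).jacobson) • (⊤ : Submodule R (Fin n → R)) ∧
    Nonempty (N ≃ₗ[R] LinearMap.ker f)

/-- `N` is an `n`-th (minimal) syzygy of `M`. -/
def IsNSyzygy : ℕ → ModuleCat.{u} R → ModuleCat.{u} R → Prop
  | 0, M, N => Nonempty (N ≃ₗ[R] M)
  | n + 1, M, N => ∃ K : ModuleCat.{u} R, IsSyzygy R M K ∧ IsNSyzygy n K N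

/-- The additive closure of a class of modules: closure under finite direct sums
and direct summands. -/
inductive AddClosure (T : Set (ModuleCat.{u} R)) : ModuleCat.{u} R → Prop
  | of {M : ModuleCat.{u} R} : M ∈ T → AddClosure T M
  | prod {M N : ModuleCat.{u} R} : AddClosure T M → AddClosure T N →
      AddClosure T (ModuleCat.of R (M × N))
  | summand {M N : ModuleCat.{u} R} : AddClosure T M → IsSummand R N M → AddClosure T N

/-- `[X]`: the additive closure of `{R} ∪ {Ω^i X : i ≥ 0, X ∈ X}`. -/
def bracket (X : Set (ModuleCat.{u} R)) : Set (ModuleCat.{u} R) :=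
  {M | AddClosure R (insert (ModuleCat.of R R)
    {N | ∃ M₀ ∈ X, ∃ i : ℕ, IsNSyzygy R i M₀ N}) M}

/-- `X ∘ Y`: modules `M` fitting in an exact sequence `0 → X → M → Y → 0`. -/
def circOp (X Y : Set (ModuleCat.{u} R)) : Set (ModuleCat.{u} R) :=
  {M | ∃ X₀ ∈ X, ∃ Y₀ ∈ Y, SES R X₀ M Y₀}

/-- `X • Y = [[X] ∘ [Y]]`. -/
def bull (X Y : Set (ModuleCat.{u} R)) : Set (ModuleCat.{u} R) :=
  bracket R (circOp R (bracket R X) (bracket R Y))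

/-- The ball `[C]_r` of radius `r` centered at `C`. -/
def ball (C : ModuleCat.{u} R) : ℕ → Set (ModuleCat.{u} R)
  | 0 => ∅
  | 1 => bracket R {C}
  | r + 2 => bracket R (circOp R (ball C (r + 1)) (bracket R {C}))

/-- A resolving subcategory of `mod R`. -/
def IsResolving (X : Set (ModuleCat.{u} R)) : Prop :=
  (∀ M ∈ X, Module.Finite R M) ∧
  (ModuleCat.of R R ∈ X) ∧
  (∀ M ∈ X, ∀ N : ModuleCat.{u} R, IsSummand R N M → N ∈ X) ∧
  (∀ L M N : ModuleCat.{u} R, SES R L M N → L ∈ X → N ∈ X → M ∈ X) ∧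
  (∀ L M N : ModuleCat.{u} R, SES R L M N → M ∈ X → N ∈ X → L ∈ X)

end Prelim

section Prelim2

variable (R : Type u) [CommRing R]

/-- The Ext module `Ext^n_R(M, N)`. -/
noncomputable def extM (M N : ModuleCat.{u} R) (n : ℕ) : ModuleCat.{u} R :=
  ((Ext R (ModuleCat.{u} R) n).obj (Opposite.op M)).obj N

/-- A finitely generated module `M` is totally reflexive if `M → M**` is bijective and
`Ext^i(M, R) = 0 = Ext^i(M*, R)` for all `i > 0`. -/
def TotallyReflexive (M : Type u) [AddCommGroup M] [Module R M] : Prop :=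
  Module.Finite R M ∧
  Function.Bijective (Module.Dual.eval R M) ∧
  (∀ i : ℕ, 0 < i →
    Subsingleton (extM R (ModuleCat.of R M) (ModuleCat.of R R) i)) ∧
  (∀ i : ℕ, 0 < i →
    Subsingleton (extM R (ModuleCat.of R (Module.Dual R M)) (ModuleCat.of R R) i))

/-- `C` is a first cosyzygy `Ω⁻¹M` of `M`: the `R`-dual of a minimal first syzygy of `M*`. -/
def IsCosyzygy (M : Type u) [AddCommGroup M] [Module R M] (C : ModuleCat.{u} R) : Prop :=
  ∃ K : ModuleCat.{u} R, IsSyzygy R (ModuleCat.of R (Module.Dual R M)) K ∧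
    Nonempty (C ≃ₗ[R] Module.Dual R K)

/-- `T` is the Auslander transpose of `M`: the cokernel of the dual of the first map
in a minimal free presentation of `M`. -/
def IsTranspose (M T : ModuleCat.{u} R) : Prop :=
  ∃ (n₀ n₁ : ℕ) (d : (Fin n₁ → R) →ₗ[R] (Fin n₀ → R)) (p : (Fin n₀ → R) →ₗ[R] M),
    Function.Surjective p ∧ LinearMap.ker p = LinearMap.range d ∧
    LinearMap.ker p ≤ ((⊥ : Ideal R).jacobson) • (⊤ : Submodule R (Fin n₀ → R)) ∧
    LinearMap.ker d ≤ ((⊥ : Ideal R).jacobson) • (⊤ : Submodule R (Fin n₁ → R)) ∧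
    Nonempty (T ≃ₗ[R] (Module.Dual R (Fin n₁ → R) ⧸ LinearMap.range d.dualMap))

/-- The `I`-torsion submodule `Γ_I(M)`. -/
def torsSub (I : Ideal R) (M : Type u) [AddCommGroup M] [Module R M] : Submodule R M :=
  ⨆ n : ℕ, Submodule.torsionBySet R M ((I ^ n : Ideal R) : Set R)

/-- A Noetherian local ring is Gorenstein iff it has finite self-injective dimension,
iff `Ext^i(k, R) = 0` for all sufficiently large `i`. -/
def IsGorensteinLocal [IsLocalRing R] : Prop :=
  ∃ n : ℕ, ∀ i : ℕ, n < i →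
    Subsingleton (extM R (ModuleCat.of R (ResidueField R)) (ModuleCat.of R R) i)

/-- A maximal Cohen-Macaulay module: finitely generated with depth equal to `dim R`. -/
def IsMCM [IsLocalRing R] (M : ModuleCat.{u} R) : Prop :=
  Module.Finite R M ∧ ((mdepth R M : ℕ∞) : WithBot ℕ∞) = ringKrullDim R

/-- `X` is a thick subcategory of `G`: closed under direct summands and two-out-of-three
for short exact sequences with all terms in `G`. -/
def IsThickIn (G X : Set (ModuleCat.{u} R)) : Prop :=
  X ⊆ G ∧ (∀ M ∈ X, ∀ N : ModuleCat.{u} R, IsSummand R N M → N ∈ X) ∧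
  (∀ L M N : ModuleCat.{u} R, L ∈ G → M ∈ G → N ∈ G → SES R L M N →
    ((L ∈ X ∧ M ∈ X) → N ∈ X) ∧ ((L ∈ X ∧ N ∈ X) → M ∈ X) ∧ ((M ∈ X ∧ N ∈ X) → L ∈ X))

/-- The resolving closure `res M`: the smallest resolving subcategory containing `M`. -/
def resClosure (M : ModuleCat.{u} R) : Set (ModuleCat.{u} R) :=
  ⋂₀ {X | IsResolving R X ∧ M ∈ X}

/-- The ball `|G|_r` (no syzygies, no free modules added). -/
def pball (G : ModuleCat.{u} R) : ℕ → Set (ModuleCat.{u} R)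
  | 0 => ∅
  | 1 => {M | AddClosure R {G} M}
  | r + 2 => {M | AddClosure R
      (circOp R (pball G (r + 1)) {N | AddClosure R {G} N}) M}

/-- An indecomposable module. -/
def Indecomp (M : ModuleCat.{u} R) : Prop :=
  ¬ Subsingleton M ∧ ∀ A B : Submodule R M, IsCompl A B → A = ⊥ ∨ B = ⊥

/-- `N` is the kernel of some surjection from a finite free module onto `M`
(a not-necessarily-minimal syzygy). -/
def IsGSyzygy (M N : ModuleCat.{u} R) : Prop :=
  ∃ (n : ℕ) (f : (Fin n → R) →ₗ[R] M), Function.Surjective f ∧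
    Nonempty (N ≃ₗ[R] LinearMap.ker f)

/-- `N` is an `n`-fold (not-necessarily-minimal) syzygy of `M`. -/
def IsGNSyzygy : ℕ → ModuleCat.{u} R → ModuleCat.{u} R → Prop
  | 0, M, N => Nonempty (N ≃ₗ[R] M)
  | n + 1, M, N => ∃ K : ModuleCat.{u} R, IsGSyzygy R M K ∧ IsGNSyzygy n K N

/-- Projective dimension at most `n`. -/
def PdLE (n : ℕ) (M : ModuleCat.{u} R) : Prop :=
  ∃ N : ModuleCat.{u} R, IsGNSyzygy R n M N ∧ Module.Projective R N

/-- Projective dimension, as an element of `ℕ∞`. -/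
noncomputable def pdim (M : ModuleCat.{u} R) : ℕ∞ :=
  sInf {n : ℕ∞ | ∃ m : ℕ, (m : ℕ∞) = n ∧ PdLE R m M}

end Prelim2

section MyAux

open LinearMap Submodule Function

variable {R : Type u} [CommRing R]

lemma myMemJsmulPi {n : ℕ} {I : Ideal R} (x : Fin n → R) (h : ∀ i, x i ∈ I) :
    x ∈ (I • ⊤ : Submodule R (Fin n → R)) := by
  rw [pi_eq_sum_univ x]
  exact Submodule.sum_mem _ fun i _ => Submodule.smul_mem_smul (h i) Submodule.mem_top

lemma myNakayamaAuto [IsNoetherianRing R] {M : Type u} [AddCommGroup M] [Module R M]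
    [Module.Finite R M] (α : M →ₗ[R] M)
    (h : ∀ x, α x - x ∈ ((⊥ : Ideal R).jacobson • ⊤ : Submodule R M)) :
    Function.Bijective α := by
  have hsurj : Function.Surjective α := by
    rw [← LinearMap.range_eq_top, eq_top_iff]
    refine Submodule.le_of_le_smul_of_le_jacobson_bot (Module.finite_def.mp inferInstance) le_rfl ?_
    intro x _
    have hx := h x
    have hxx : x = α x - (α x - x) := (sub_sub_cancel _ _).symm
    rw [hxx]
    exact sub_mem (Submodule.mem_sup_left ⟨x, rfl⟩) (Submodule.mem_sup_right hx)
  exact ⟨OrzechProperty.injective_of_surjective_endomorphism α hsurj, hsurj⟩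

lemma myExistsLift {P A B : Type u} [AddCommGroup P] [Module R P] [Module.Projective R P]
    [AddCommGroup A] [Module R A] [AddCommGroup B] [Module R B]
    (g : A →ₗ[R] B) (f : P →ₗ[R] B) (h : ∀ x, f x ∈ LinearMap.range g) :
    ∃ h' : P →ₗ[R] A, g ∘ₗ h' = f := by
  obtain ⟨h', hh'⟩ := Module.projective_lifting_property g.rangeRestrict
    (f.codRestrict (LinearMap.range g) h) g.surjective_rangeRestrict
  refine ⟨h', ?_⟩
  ext x
  exact congrArg Subtype.val (LinearMap.congr_fun hh' x)

lemma myExistsMinimalSurjection [IsLocalRing R] (M : Type u) [AddCommGroup M] [Module R M]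
    [Module.Finite R M] :
    ∃ (n : ℕ) (p : (Fin n → R) →ₗ[R] M), Surjective p ∧
      LinearMap.ker p ≤ ((⊥ : Ideal R).jacobson • ⊤ : Submodule R (Fin n → R)) := by
  have H : ∀ n (x : Fin n → M), Submodule.span R (Set.range x) = ⊤ →
      ∃ (m : ℕ) (p : (Fin m → R) →ₗ[R] M), Surjective p ∧
        LinearMap.ker p ≤ ((⊥ : Ideal R).jacobson • ⊤ : Submodule R (Fin m → R)) := by
    intro n
    induction n using Nat.strong_induction_on with
    | _ n IH =>
      intro x hx
      by_cases hall : ∀ a : Fin n → R, (∑ i, a i • x i) = 0 → ∀ i, a i ∈ maximalIdeal R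
      · refine ⟨n, Fintype.linearCombination R x, ?_, ?_⟩
        · rw [← LinearMap.range_eq_top, Fintype.range_linearCombination, hx]
        · intro a ha
          rw [IsLocalRing.jacobson_eq_maximalIdeal ⊥ bot_ne_top]
          refine myMemJsmulPi a (hall a ?_)
          simpa [Fintype.linearCombination_apply] using ha
      · push_neg at hall
        obtain ⟨a, ha0, j, hj⟩ := hall
        have hu : IsUnit (a j) := by
          by_contra h
          exact hj ((IsLocalRing.mem_maximalIdeal _).mpr (mem_nonunits_iff.mpr h))
        match n, x, a, j, ha0, hj, hu with
        | Nat.succ m, x, a, j, ha0, hj, hu =>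
        refine IH m (Nat.lt_succ_self m) (x ∘ j.succAbove) ?_
        have hmem : ∀ i, x i ∈ Submodule.span R (Set.range (x ∘ j.succAbove)) := by
          have hne : ∀ i, i ≠ j → x i ∈ Submodule.span R (Set.range (x ∘ j.succAbove)) := by
            intro i hij
            obtain ⟨z, hz⟩ := Fin.exists_succAbove_eq hij
            exact Submodule.subset_span ⟨z, congrArg x hz⟩
          intro i
          by_cases hij : i = j
          · rw [hij]
            have hsum : a j • x j = -∑ l ∈ Finset.univ.erase j, a l • x l := by
              rw [eq_neg_iff_add_eq_zero, ← Finset.add_sum_erase Finset.univ (fun l => a l • x l)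
                (Finset.mem_univ j)] at *
              exact ha0
            have hmem2 : a j • x j ∈ Submodule.span R (Set.range (x ∘ j.succAbove)) := by
              rw [hsum]
              refine neg_mem (Submodule.sum_mem _ fun l hl => ?_)
              exact Submodule.smul_mem _ _ (hne l (Finset.ne_of_mem_erase hl))
            have hxj : x j = (↑hu.unit⁻¹ : R) • (a j • x j) := by
              rw [smul_smul]
              nth_rewrite 2 [← hu.unit_spec]
              rw [Units.inv_mul, one_smul]
            rw [hxj]
            exact Submodule.smul_mem _ _ hmem2
          · exact hne i hij
        rw [eq_top_iff, ← hx, Submodule.span_le]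
        rintro _ ⟨i, rfl⟩
        exact hmem i
  obtain ⟨n, x, hx⟩ := Module.Finite.exists_fin (R := R) (M := M)
  exact H n x hx


lemma myExistsMinimalPresentation [IsNoetherianRing R] [IsLocalRing R] (M : Type u)
    [AddCommGroup M] [Module R M] [Module.Finite R M] :
    ∃ (n₀ n₁ : ℕ) (d : (Fin n₁ → R) →ₗ[R] (Fin n₀ → R)) (p : (Fin n₀ → R) →ₗ[R] M),
      Surjective p ∧ LinearMap.ker p = LinearMap.range d ∧
      LinearMap.ker p ≤ ((⊥ : Ideal R).jacobson • ⊤ : Submodule R (Fin n₀ → R)) ∧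
      LinearMap.ker d ≤ ((⊥ : Ideal R).jacobson • ⊤ : Submodule R (Fin n₁ → R)) := by
  obtain ⟨n₀, p, hp, hmin⟩ := myExistsMinimalSurjection (R := R) M
  haveI : Module.Finite R ↥(LinearMap.ker p) := inferInstance
  obtain ⟨n₁, p', hp', hmin'⟩ := myExistsMinimalSurjection (R := R) ↥(LinearMap.ker p)
  refine ⟨n₀, n₁, (LinearMap.ker p).subtype ∘ₗ p', p, hp, ?_, hmin, ?_⟩
  · rw [LinearMap.range_comp, LinearMap.range_eq_top.2 hp', Submodule.map_top,
      Submodule.range_subtype]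
  · have : LinearMap.ker ((LinearMap.ker p).subtype ∘ₗ p') = LinearMap.ker p' := by
      ext z
      simp [LinearMap.mem_ker]
    rw [this]
    exact hmin'

lemma myDualFactor {A M : Type u} [AddCommGroup A] [Module R A] [AddCommGroup M] [Module R M]
    (p : A →ₗ[R] M) (hp : Surjective p) (hzero : ∀ f : M →ₗ[R] R, f = 0)
    (α : A →ₗ[R] R) (hα : LinearMap.ker p ≤ LinearMap.ker α) : α = 0 := by
  ext a
  have h1 : α a = (LinearMap.ker p).liftQ α hα (Submodule.Quotient.mk a) := by
    simp
  have h2 : (p.quotKerEquivOfSurjective hp) (Submodule.Quotient.mk a) = p a := by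
    simp [LinearMap.quotKerEquivOfSurjective]
  have h3 : (p.quotKerEquivOfSurjective hp).symm (p a) = Submodule.Quotient.mk a :=
    (LinearEquiv.symm_apply_eq _).mpr h2.symm
  have h4 := congrFun (congrArg DFunLike.coe (hzero (((LinearMap.ker p).liftQ α hα) ∘ₗ
    (p.quotKerEquivOfSurjective hp).symm.toLinearMap))) (p a)
  simp only [LinearMap.coe_comp, Function.comp_apply, LinearEquiv.coe_coe,
    LinearMap.zero_apply] at h4
  rw [h3] at h4
  rw [h1, h4]
  simp

lemma mySimpleEquivResidue [IsLocalRing R] (S : Type u) [AddCommGroup S] [Module R S]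
    [IsSimpleModule R S] : Nonempty (ResidueField R ≃ₗ[R] S) := by
  haveI : Nontrivial S := IsSimpleModule.nontrivial R S
  obtain ⟨x, hx⟩ := exists_ne (0 : S)
  set g := LinearMap.toSpanSingleton R S x with hgdef
  have hg : Surjective g := by
    rw [← LinearMap.range_eq_top, ← LinearMap.span_singleton_eq_range]
    rcases eq_bot_or_eq_top (Submodule.span R {x}) with hbot | htop
    · exact absurd (Submodule.span_singleton_eq_bot.mp hbot) hx
    · exact htop
  have hcoatom : IsCoatom (LinearMap.ker g : Ideal R) := by
    constructor
    · intro htop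
      apply hx
      have : g 1 = 0 := by
        have : (1 : R) ∈ LinearMap.ker g := htop ▸ Submodule.mem_top
        exact this
      simpa [hgdef, LinearMap.toSpanSingleton_apply] using this
    · intro I hlt
      obtain ⟨a, haI, hak⟩ := SetLike.exists_of_lt hlt
      have hga : g a ≠ 0 := fun h0 => hak (LinearMap.mem_ker.mpr h0)
      have hspan : Submodule.span R {g a} = ⊤ := by
        rcases eq_bot_or_eq_top (Submodule.span R {g a}) with hbot | htop
        · exact absurd (Submodule.span_singleton_eq_bot.mp hbot) hga
        · exact htop
      rw [eq_top_iff]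
      intro r _
      have : g r ∈ Submodule.span R {g a} := hspan ▸ Submodule.mem_top
      obtain ⟨s, hs⟩ := Submodule.mem_span_singleton.mp this
      have hker : r - s * a ∈ LinearMap.ker g := by
        rw [LinearMap.mem_ker, map_sub, sub_eq_zero, ← hs]
        rw [← map_smul]
        rfl
      have := hlt.le hker
      have : r = (r - s * a) + s * a := by ring
      rw [this]
      exact add_mem (hlt.le hker) (Ideal.mul_mem_left _ _ haI)
  have hmax : Ideal.IsMaximal (LinearMap.ker g) := Ideal.isMaximal_def.mpr hcoatom
  have hkg : LinearMap.ker g = maximalIdeal R := IsLocalRing.eq_maximalIdeal hmax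
  set f := Algebra.linearMap R (ResidueField R) with hfdef
  have hf : Surjective f := Ideal.Quotient.mk_surjective
  have hkf : LinearMap.ker f = LinearMap.ker g := by
    ext r
    rw [LinearMap.mem_ker, hkg]
    show algebraMap R (ResidueField R) r = 0 ↔ _
    exact Ideal.Quotient.eq_zero_iff_mem
  exact ⟨(f.quotKerEquivOfSurjective hf).symm.trans
    ((Submodule.quotEquivOfEq _ _ hkf).trans (g.quotKerEquivOfSurjective hg))⟩

lemma myRegularElem [IsLocalRing R] (hdepth : 0 < mdepth R R) :
    ∃ r : R, r ∈ maximalIdeal R ∧ IsSMulRegular R r := by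
  unfold mdepth at hdepth
  obtain ⟨s, hsS, hs⟩ := lt_sSup_iff.mp hdepth
  obtain ⟨rs, hlen, hmem, hreg⟩ := hsS
  match rs, hlen, hmem, hreg with
  | [], hlen, _, _ =>
    rw [List.length_nil] at hlen
    rw [← hlen] at hs
    simp at hs
  | r :: rest, _, hmem, hreg =>
    exact ⟨r, hmem r List.mem_cons_self,
      ((RingTheory.Sequence.isWeaklyRegular_cons_iff R r rest).mp hreg).1⟩

lemma myFinLenFinite {M : Type u} [AddCommGroup M] [Module R M] (h : IsFiniteLength R M) :
    Module.Finite R M := by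
  haveI := (isFiniteLength_iff_isNoetherian_isArtinian.mp h).1
  infer_instance

/-- every element of a finite length module is killed by a power of the maximal ideal
(uniformly). -/
lemma myFinLenTorsion [IsLocalRing R] {M : Type u} [AddCommGroup M] [Module R M]
    (h : IsFiniteLength R M) :
    ∃ t : ℕ, ∀ c ∈ maximalIdeal R ^ t, ∀ x : M, c • x = (0 : M) := by
  induction h with
  | of_subsingleton =>
    exact ⟨0, fun c _ x => Subsingleton.elim _ _⟩
  | @of_simple_quotient M _ _ N _ _ ih =>
    obtain ⟨t, ht⟩ := ih
    refine ⟨t + 1, ?_⟩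
    have key : maximalIdeal R ^ (t + 1) ≤ Module.annihilator R M := by
      rw [pow_succ]
      refine Ideal.mul_le.mpr fun a ha b hb => ?_
      rw [Module.mem_annihilator]
      intro x
      have hbx : b • x ∈ N := by
        have hsimple : ∀ y : M ⧸ N, b • y = 0 := by
          intro y
          obtain ⟨e⟩ := mySimpleEquivResidue (R := R) (M ⧸ N)
          apply e.symm.injective
          rw [map_smul, map_zero]
          obtain ⟨z, hz⟩ := Ideal.Quotient.mk_surjective (I := maximalIdeal R) (e.symm y)
          rw [← hz]
          have : (b • Ideal.Quotient.mk (maximalIdeal R) z : ResidueField R) =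
              Ideal.Quotient.mk (maximalIdeal R) (b * z) := rfl
          refine this.trans ((Ideal.Quotient.eq_zero_iff_mem).mpr ?_)
          exact Ideal.mul_mem_right _ _ hb
        have := hsimple (Submodule.Quotient.mk x)
        rwa [← Submodule.Quotient.mk_smul, Submodule.Quotient.mk_eq_zero] at this
      have hth := ht a ha ⟨b • x, hbx⟩
      have hcoe : a • (b • x) = ((a • (⟨b • x, hbx⟩ : N) : N) : M) := rfl
      rw [mul_smul, hcoe, hth, Submodule.coe_zero]
    intro c hc x
    exact Module.mem_annihilator.mp (key hc) x

lemma myDualZero [IsLocalRing R] {M : Type u} [AddCommGroup M] [Module R M]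
    (hfl : IsFiniteLength R M) (r : R) (hr : r ∈ maximalIdeal R) (hreg : IsSMulRegular R r) :
    ∀ f : M →ₗ[R] R, f = 0 := by
  obtain ⟨t, ht⟩ := myFinLenTorsion hfl
  intro f
  ext x
  have h1 : r ^ t • x = 0 := ht (r ^ t) (Ideal.pow_mem_pow hr t) x
  have h2 : r ^ t • f x = 0 := by rw [← map_smul, h1, map_zero]
  have h3 : r ^ t • f x = r ^ t • (0 : R) := by rw [h2, smul_zero]
  exact (hreg.pow t) h3


lemma myDualMapComp {A B C : Type u} [AddCommGroup A] [Module R A] [AddCommGroup B] [Module R B]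
    [AddCommGroup C] [Module R C] (f : A →ₗ[R] B) (g : B →ₗ[R] C) :
    (g ∘ₗ f).dualMap = f.dualMap ∘ₗ g.dualMap := rfl

lemma myDualInj {A B : Type u} [AddCommGroup A] [Module R A] [AddCommGroup B] [Module R B]
    (f : A →ₗ[R] B) (hf : Surjective f) : Injective f.dualMap := by
  intro γ γ' hγ
  ext x
  obtain ⟨y, rfl⟩ := hf x
  exact LinearMap.congr_fun hγ y

lemma myDualSurj {A B : Type u} [AddCommGroup A] [Module R A] [AddCommGroup B] [Module R B]
    (f : A →ₗ[R] B) (hf : Bijective f) : Surjective f.dualMap := by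
  intro β
  refine ⟨β ∘ₗ (LinearEquiv.ofBijective f hf).symm.toLinearMap, ?_⟩
  ext x
  show β ((LinearEquiv.ofBijective f hf).symm (f x)) = β x
  rw [show f x = (LinearEquiv.ofBijective f hf) x from rfl, LinearEquiv.symm_apply_apply]

lemma myTransposeSummand [IsNoetherianRing R] {M : Type u} [AddCommGroup M] [Module R M]
    {n₀ n₁ : ℕ} (d : (Fin n₁ → R) →ₗ[R] (Fin n₀ → R)) (p : (Fin n₀ → R) →ₗ[R] M)
    (hp : Surjective p) (hk : LinearMap.ker p = LinearMap.range d)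
    (hm0 : LinearMap.ker p ≤ ((⊥ : Ideal R).jacobson • ⊤ : Submodule R (Fin n₀ → R)))
    (hm1 : LinearMap.ker d ≤ ((⊥ : Ideal R).jacobson • ⊤ : Submodule R (Fin n₁ → R)))
    {E₀ E₁ : Type u} [AddCommGroup E₀] [Module R E₀] [AddCommGroup E₁] [Module R E₁]
    [Module.Projective R E₀] [Module.Projective R E₁]
    (e : E₁ →ₗ[R] E₀) (q : E₀ →ₗ[R] M) (hq : Surjective q)
    (hke : LinearMap.ker q = LinearMap.range e) :
    ∃ (i : (Module.Dual R (Fin n₁ → R) ⧸ LinearMap.range d.dualMap) →ₗ[R]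
          (Module.Dual R E₁ ⧸ LinearMap.range e.dualMap))
      (pr : (Module.Dual R E₁ ⧸ LinearMap.range e.dualMap) →ₗ[R]
          (Module.Dual R (Fin n₁ → R) ⧸ LinearMap.range d.dualMap)),
      pr ∘ₗ i = LinearMap.id := by
  obtain ⟨φ₀, hφ₀⟩ := Module.projective_lifting_property q p hq
  obtain ⟨φ₁, hφ₁⟩ := myExistsLift e (φ₀ ∘ₗ d) (by
    intro x
    rw [← hke, LinearMap.mem_ker]
    have h1 : q (φ₀ (d x)) = p (d x) := LinearMap.congr_fun hφ₀ (d x)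
    have h2 : p (d x) = 0 := by
      have : d x ∈ LinearMap.ker p := hk ▸ ⟨x, rfl⟩
      exact this
    exact h1.trans h2)
  obtain ⟨ψ₀, hψ₀⟩ := Module.projective_lifting_property p q hp
  obtain ⟨ψ₁, hψ₁⟩ := myExistsLift d (ψ₀ ∘ₗ e) (by
    intro x
    rw [← hk, LinearMap.mem_ker]
    have h1 : p (ψ₀ (e x)) = q (e x) := LinearMap.congr_fun hψ₀ (e x)
    have h2 : q (e x) = 0 := by
      have : e x ∈ LinearMap.ker q := hke ▸ ⟨x, rfl⟩
      exact this
    exact h1.trans h2)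
  set α₀ := ψ₀ ∘ₗ φ₀ with hα₀def
  have hpα₀ : ∀ x, p (α₀ x) = p x := by
    intro x
    have h1 : p (ψ₀ (φ₀ x)) = q (φ₀ x) := LinearMap.congr_fun hψ₀ (φ₀ x)
    have h2 : q (φ₀ x) = p x := LinearMap.congr_fun hφ₀ x
    exact h1.trans h2
  have hα₀mem : ∀ x, α₀ x - x ∈ ((⊥ : Ideal R).jacobson • ⊤ : Submodule R (Fin n₀ → R)) := by
    intro x
    apply hm0
    rw [LinearMap.mem_ker, map_sub, hpα₀, sub_self]
  have hα₀bij : Bijective α₀ := myNakayamaAuto α₀ hα₀mem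
  obtain ⟨h, hh⟩ := myExistsLift d (α₀ - LinearMap.id) (by
    intro x
    rw [← hk, LinearMap.mem_ker]
    show p (α₀ x - x) = 0
    rw [map_sub, hpα₀, sub_self])
  set α₁ := ψ₁ ∘ₗ φ₁ with hα₁def
  have hcomm : d ∘ₗ α₁ = α₀ ∘ₗ d := by
    calc d ∘ₗ (ψ₁ ∘ₗ φ₁) = (d ∘ₗ ψ₁) ∘ₗ φ₁ := by rw [LinearMap.comp_assoc]
    _ = (ψ₀ ∘ₗ e) ∘ₗ φ₁ := by rw [hψ₁]
    _ = ψ₀ ∘ₗ (e ∘ₗ φ₁) := by rw [LinearMap.comp_assoc]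
    _ = ψ₀ ∘ₗ (φ₀ ∘ₗ d) := by rw [hφ₁]
    _ = (ψ₀ ∘ₗ φ₀) ∘ₗ d := by rw [LinearMap.comp_assoc]
  have hα₁mem : ∀ x, α₁ x - x ∈ ((⊥ : Ideal R).jacobson • ⊤ : Submodule R (Fin n₁ → R)) := by
    intro x
    have hsplit : α₁ x - x = (α₁ x - x - h (d x)) + h (d x) := by abel
    rw [hsplit]
    refine add_mem (hm1 ?_) ?_
    · rw [LinearMap.mem_ker]
      have h1 : d (α₁ x) = α₀ (d x) := LinearMap.congr_fun hcomm x
      have h2 : d (h (d x)) = α₀ (d x) - d x := by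
        have := LinearMap.congr_fun hh (d x)
        simpa using this
      rw [map_sub, map_sub, h1, h2]
      abel
    · have hdx : d x ∈ ((⊥ : Ideal R).jacobson • ⊤ : Submodule R (Fin n₀ → R)) :=
        hm0 (hk ▸ ⟨x, rfl⟩)
      have hmem : h (d x) ∈ Submodule.map h ((⊥ : Ideal R).jacobson • ⊤) := ⟨d x, hdx, rfl⟩
      rw [Submodule.map_smul''] at hmem
      exact Submodule.smul_mono le_rfl le_top hmem
  have hα₁bij : Bijective α₁ := myNakayamaAuto α₁ hα₁mem
  have hdual1 : φ₁.dualMap ∘ₗ e.dualMap = d.dualMap ∘ₗ φ₀.dualMap := by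
    rw [← myDualMapComp φ₁ e, ← myDualMapComp d φ₀, hφ₁]
  have hdual2 : ψ₁.dualMap ∘ₗ d.dualMap = e.dualMap ∘ₗ ψ₀.dualMap := by
    rw [← myDualMapComp ψ₁ d, ← myDualMapComp e ψ₀, hψ₁]
  have hdualc : α₁.dualMap ∘ₗ d.dualMap = d.dualMap ∘ₗ α₀.dualMap := by
    rw [← myDualMapComp α₁ d, ← myDualMapComp d α₀, hcomm]
  have hα₁dinj : Injective α₁.dualMap := myDualInj α₁ hα₁bij.surjective
  have hα₁dsurj : Surjective α₁.dualMap := myDualSurj α₁ hα₁bij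
  have hα₀dsurj : Surjective α₀.dualMap := myDualSurj α₀ hα₀bij
  have hrange : ∀ γ, α₁.dualMap γ ∈ LinearMap.range d.dualMap ↔
      γ ∈ LinearMap.range d.dualMap := by
    intro γ
    constructor
    · rintro ⟨v, hv⟩
      obtain ⟨w, rfl⟩ := hα₀dsurj v
      have : α₁.dualMap (d.dualMap w) = d.dualMap (α₀.dualMap w) := LinearMap.congr_fun hdualc w
      rw [← this] at hv
      exact ⟨w, hα₁dinj hv⟩
    · rintro ⟨w, rfl⟩
      exact ⟨α₀.dualMap w, (LinearMap.congr_fun hdualc w).symm⟩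
  have hcompat1 : LinearMap.range e.dualMap ≤
      Submodule.comap φ₁.dualMap (LinearMap.range d.dualMap) := by
    rintro _ ⟨γ, rfl⟩
    exact Submodule.mem_comap.mpr ⟨φ₀.dualMap γ, (LinearMap.congr_fun hdual1 γ).symm⟩
  have hcompat2 : LinearMap.range d.dualMap ≤
      Submodule.comap ψ₁.dualMap (LinearMap.range e.dualMap) := by
    rintro _ ⟨γ, rfl⟩
    exact Submodule.mem_comap.mpr ⟨ψ₀.dualMap γ, (LinearMap.congr_fun hdual2 γ).symm⟩
  set pr := Submodule.mapQ (LinearMap.range e.dualMap) (LinearMap.range d.dualMap)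
    φ₁.dualMap hcompat1 with hprdef
  set i' := Submodule.mapQ (LinearMap.range d.dualMap) (LinearMap.range e.dualMap)
    ψ₁.dualMap hcompat2 with hi'def
  set θ := pr ∘ₗ i' with hθdef
  have hθapp : ∀ γ, θ (Submodule.Quotient.mk γ) = Submodule.Quotient.mk (α₁.dualMap γ) := by
    intro γ
    show pr (i' (Submodule.Quotient.mk γ)) = _
    rw [hi'def, Submodule.mapQ_apply, hprdef, Submodule.mapQ_apply]
    rfl
  have hθbij : Bijective θ := by
    constructor
    · intro u v huv
      obtain ⟨γ, rfl⟩ := Submodule.Quotient.mk_surjective _ u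
      obtain ⟨γ', rfl⟩ := Submodule.Quotient.mk_surjective _ v
      rw [hθapp, hθapp] at huv
      rw [Submodule.Quotient.eq] at huv ⊢
      rw [← map_sub] at huv
      exact (hrange _).mp huv
    · intro u
      obtain ⟨β, rfl⟩ := Submodule.Quotient.mk_surjective _ u
      obtain ⟨γ, hγ⟩ := hα₁dsurj β
      exact ⟨Submodule.Quotient.mk γ, by rw [hθapp, hγ]⟩
  set θe := LinearEquiv.ofBijective θ hθbij with hθedef
  refine ⟨i' ∘ₗ θe.symm.toLinearMap, pr, ?_⟩
  apply LinearMap.ext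
  intro u
  show pr (i' (θe.symm u)) = u
  have h1 : pr (i' (θe.symm u)) = θ (θe.symm u) := rfl
  have h2 : θ (θe.symm u) = θe (θe.symm u) := rfl
  rw [h1, h2, LinearEquiv.apply_symm_apply]


lemma myHorseshoe [IsLocalRing R]
    {Nm L S : Type u} [AddCommGroup Nm] [Module R Nm] [AddCommGroup L] [Module R L]
    [AddCommGroup S] [Module R S]
    (ι : Nm →ₗ[R] L) (π : L →ₗ[R] S) (hι : Injective ι) (hπ : Surjective π)
    (hex : LinearMap.ker π = LinearMap.range ι)
    (hNdual : ∀ f : Nm →ₗ[R] R, f = 0)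
    {a₀ a₁ : ℕ} (dN : (Fin a₁ → R) →ₗ[R] (Fin a₀ → R)) (pN : (Fin a₀ → R) →ₗ[R] Nm)
    (hpN : Surjective pN) (hkN : LinearMap.ker pN = LinearMap.range dN)
    {b₀ b₁ : ℕ} (dS : (Fin b₁ → R) →ₗ[R] (Fin b₀ → R)) (pS : (Fin b₀ → R) →ₗ[R] S)
    (hpS : Surjective pS) (hkS : LinearMap.ker pS = LinearMap.range dS) :
    ∃ (e : ((Fin a₁ → R) × (Fin b₁ → R)) →ₗ[R] ((Fin a₀ → R) × (Fin b₀ → R)))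
      (q : ((Fin a₀ → R) × (Fin b₀ → R)) →ₗ[R] L),
      Surjective q ∧ LinearMap.ker q = LinearMap.range e ∧
      SES R (ModuleCat.of R (Module.Dual R (Fin b₁ → R) ⧸ LinearMap.range dS.dualMap))
        (ModuleCat.of R
          (Module.Dual R ((Fin a₁ → R) × (Fin b₁ → R)) ⧸ LinearMap.range e.dualMap))
        (ModuleCat.of R (Module.Dual R (Fin a₁ → R) ⧸ LinearMap.range dN.dualMap)) := by
  obtain ⟨σ, hσ⟩ := Module.projective_lifting_property π pS hπ
  obtain ⟨τ, hτ⟩ := myExistsLift (ι ∘ₗ pN) (-(σ ∘ₗ dS)) (by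
    intro y
    have h1 : π (σ (dS y)) = pS (dS y) := LinearMap.congr_fun hσ (dS y)
    have h2 : pS (dS y) = 0 := (hkS ▸ ⟨y, rfl⟩ : dS y ∈ LinearMap.ker pS)
    have h3 : σ (dS y) ∈ LinearMap.ker π := by rw [LinearMap.mem_ker, h1, h2]
    rw [hex] at h3
    obtain ⟨nn, hnn⟩ := h3
    obtain ⟨aa, rfl⟩ := hpN nn
    refine ⟨-aa, ?_⟩
    show ι (pN (-aa)) = -(σ (dS y))
    rw [map_neg, map_neg, hnn])
  have hτapp : ∀ y, ι (pN (τ y)) = -(σ (dS y)) := by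
    intro y
    have := LinearMap.congr_fun hτ y
    simpa using this
  set e := LinearMap.prod
      ((dN ∘ₗ LinearMap.fst R (Fin a₁ → R) (Fin b₁ → R)) +
        (τ ∘ₗ LinearMap.snd R (Fin a₁ → R) (Fin b₁ → R)))
      (dS ∘ₗ LinearMap.snd R (Fin a₁ → R) (Fin b₁ → R)) with hedef
  set q := (ι ∘ₗ pN) ∘ₗ LinearMap.fst R (Fin a₀ → R) (Fin b₀ → R) +
      σ ∘ₗ LinearMap.snd R (Fin a₀ → R) (Fin b₀ → R) with hqdef
  have heapp : ∀ z : (Fin a₁ → R) × (Fin b₁ → R), e z = (dN z.1 + τ z.2, dS z.2) := fun z => rfl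
  have hqapp : ∀ z : (Fin a₀ → R) × (Fin b₀ → R), q z = ι (pN z.1) + σ z.2 := fun z => rfl
  have hπι : ∀ n, π (ι n) = 0 := by
    intro n
    exact (hex ▸ ⟨n, rfl⟩ : ι n ∈ LinearMap.ker π)
  have hq : Surjective q := by
    intro l
    obtain ⟨b, hb⟩ := hpS (π l)
    have h1 : π (l - σ b) = 0 := by
      rw [map_sub, sub_eq_zero]
      exact ((LinearMap.congr_fun hσ b).trans hb).symm
    have h2 : l - σ b ∈ LinearMap.ker π := h1
    rw [hex] at h2
    obtain ⟨nn, hnn⟩ := h2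
    obtain ⟨aa, rfl⟩ := hpN nn
    refine ⟨(aa, b), ?_⟩
    rw [hqapp]
    dsimp only
    rw [hnn]
    abel
  have hkq : LinearMap.ker q = LinearMap.range e := by
    apply le_antisymm
    · intro z hz
      have hz0 : ι (pN z.1) + σ z.2 = 0 := hz
      have hπz : pS z.2 = 0 := by
        have := congrArg π hz0
        rw [map_add, map_zero, hπι, zero_add] at this
        rw [← (LinearMap.congr_fun hσ z.2)]
        exact this
      obtain ⟨y, hy⟩ : z.2 ∈ LinearMap.range dS := hkS ▸ hπz
      have ha' : ι (pN (z.1 - τ y)) = 0 := by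
        rw [map_sub, map_sub, hτapp, hy, sub_neg_eq_add]
        exact hz0
      have hpa' : pN (z.1 - τ y) = 0 := by
        apply hι
        rw [ha', map_zero]
      obtain ⟨x, hx⟩ : z.1 - τ y ∈ LinearMap.range dN := hkN ▸ hpa'
      refine ⟨(x, y), ?_⟩
      rw [heapp]
      dsimp only
      rw [hx, hy]
      ext <;> simp
    · rintro _ ⟨z, rfl⟩
      show q (e z) = 0
      rw [heapp, hqapp]
      dsimp only
      have h1 : pN (dN z.1) = 0 := (hkN ▸ ⟨z.1, rfl⟩ : dN z.1 ∈ LinearMap.ker pN)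
      rw [map_add, map_add, h1, map_zero, zero_add, hτapp]
      abel
  -- now the SES of transposes
  set inl₁ := LinearMap.inl R (Fin a₁ → R) (Fin b₁ → R) with hinl₁
  set inr₁ := LinearMap.inr R (Fin a₁ → R) (Fin b₁ → R) with hinr₁
  set snd₁ := LinearMap.snd R (Fin a₁ → R) (Fin b₁ → R) with hsnd₁
  set fst₁ := LinearMap.fst R (Fin a₁ → R) (Fin b₁ → R) with hfst₁
  set inl₀ := LinearMap.inl R (Fin a₀ → R) (Fin b₀ → R) with hinl₀
  set inr₀ := LinearMap.inr R (Fin a₀ → R) (Fin b₀ → R) with hinr₀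
  set fst₀ := LinearMap.fst R (Fin a₀ → R) (Fin b₀ → R) with hfst₀
  have hcmp1 : LinearMap.range dS.dualMap ≤
      Submodule.comap snd₁.dualMap (LinearMap.range e.dualMap) := by
    rintro _ ⟨γ, rfl⟩
    refine Submodule.mem_comap.mpr ⟨γ ∘ₗ LinearMap.snd R (Fin a₀ → R) (Fin b₀ → R), ?_⟩
    apply LinearMap.ext
    intro z
    show γ ((e z).2) = γ (dS z.2)
    rw [heapp]
  have hcmp2 : LinearMap.range e.dualMap ≤
      Submodule.comap inl₁.dualMap (LinearMap.range dN.dualMap) := by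
    rintro _ ⟨δ, rfl⟩
    refine Submodule.mem_comap.mpr ⟨δ ∘ₗ inl₀, ?_⟩
    apply LinearMap.ext
    intro x
    show δ (inl₀ (dN x)) = δ (e (inl₁ x))
    rw [heapp]
    show δ (dN x, 0) = δ (dN (inl₁ x).1 + τ (inl₁ x).2, dS (inl₁ x).2)
    have h1 : (inl₁ x).1 = x := rfl
    have h2 : (inl₁ x).2 = 0 := rfl
    rw [h1, h2, map_zero, map_zero, add_zero]
  set j := Submodule.mapQ (LinearMap.range dS.dualMap) (LinearMap.range e.dualMap)
    snd₁.dualMap hcmp1 with hjdef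
  set g := Submodule.mapQ (LinearMap.range e.dualMap) (LinearMap.range dN.dualMap)
    inl₁.dualMap hcmp2 with hgdef
  have hjapp : ∀ β, j (Submodule.Quotient.mk β) = Submodule.Quotient.mk (snd₁.dualMap β) :=
    fun β => rfl
  have hgapp : ∀ γ, g (Submodule.Quotient.mk γ) = Submodule.Quotient.mk (inl₁.dualMap γ) :=
    fun γ => rfl
  have hinj : Injective j := by
    have key : ∀ β : Module.Dual R (Fin b₁ → R),
        snd₁.dualMap β ∈ LinearMap.range e.dualMap → β ∈ LinearMap.range dS.dualMap := by
      intro β ⟨δ, hδ⟩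
      set δ₁ := δ ∘ₗ inl₀ with hδ₁
      have hδ₁0 : δ₁ = 0 := by
        apply myDualFactor pN hpN hNdual δ₁
        rw [hkN]
        rintro _ ⟨x, rfl⟩
        show δ (inl₀ (dN x)) = 0
        have h1 : (inl₀ (dN x)) = e (inl₁ x) := by
          rw [heapp]
          show (dN x, 0) = (dN (inl₁ x).1 + τ (inl₁ x).2, dS (inl₁ x).2)
          have ha : (inl₁ x).1 = x := rfl
          have hb : (inl₁ x).2 = 0 := rfl
          rw [ha, hb, map_zero, map_zero, add_zero]
        rw [h1]
        have h2 : δ (e (inl₁ x)) = (e.dualMap δ) (inl₁ x) := rfl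
        rw [h2, hδ]
        show β ((inl₁ x).2) = 0
        have hb : (inl₁ x).2 = 0 := rfl
        rw [hb, map_zero]
      refine ⟨δ ∘ₗ inr₀, ?_⟩
      apply LinearMap.ext
      intro y
      show δ (inr₀ (dS y)) = β y
      have h1 : e (inr₁ y) = (τ y, dS y) := by
        rw [heapp]
        show (dN (inr₁ y).1 + τ (inr₁ y).2, dS (inr₁ y).2) = (τ y, dS y)
        have ha : (inr₁ y).1 = 0 := rfl
        have hb : (inr₁ y).2 = y := rfl
        rw [ha, hb, map_zero, zero_add]
      have h2 : δ (τ y, dS y) = δ (inl₀ (τ y)) + δ (inr₀ (dS y)) := by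
        rw [← map_add]
        congr 1
        show (τ y, dS y) = ((τ y, 0) : (Fin a₀ → R) × (Fin b₀ → R)) + ((0, dS y) : _)
        rw [Prod.mk_add_mk, add_zero, zero_add]
      have h3 : δ (inl₀ (τ y)) = 0 := by
        have : δ (inl₀ (τ y)) = δ₁ (τ y) := rfl
        rw [this, hδ₁0]
        rfl
      have h4 : δ (e (inr₁ y)) = β ((inr₁ y).2) := by
        have : δ (e (inr₁ y)) = (e.dualMap δ) (inr₁ y) := rfl
        rw [this, hδ]
        rfl
      have hb : (inr₁ y).2 = y := rfl
      rw [hb] at h4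
      rw [h1, h2, h3, zero_add] at h4
      exact h4
    intro u v huv
    obtain ⟨β, rfl⟩ := Submodule.Quotient.mk_surjective _ u
    obtain ⟨β', rfl⟩ := Submodule.Quotient.mk_surjective _ v
    rw [hjapp, hjapp, Submodule.Quotient.eq] at huv
    rw [Submodule.Quotient.eq]
    rw [← map_sub] at huv
    exact key _ huv
  have hsurj : Surjective g := by
    intro u
    obtain ⟨w, rfl⟩ := Submodule.Quotient.mk_surjective _ u
    refine ⟨Submodule.Quotient.mk (w ∘ₗ fst₁), ?_⟩
    have hcomp : inl₁.dualMap (w ∘ₗ fst₁) = w := LinearMap.ext fun x => rfl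
    rw [hgapp, hcomp]
  have hkerg : LinearMap.ker g = LinearMap.range j := by
    apply le_antisymm
    · intro u hu
      obtain ⟨γ, rfl⟩ := Submodule.Quotient.mk_surjective _ u
      rw [LinearMap.mem_ker, hgapp, Submodule.Quotient.mk_eq_zero] at hu
      obtain ⟨v, hv⟩ := hu
      set δ := v ∘ₗ fst₀ with hδdef
      set γ' := γ - e.dualMap δ with hγ'def
      have hγ'inl : ∀ x, γ' (inl₁ x) = 0 := by
        intro x
        show γ (inl₁ x) - (e.dualMap δ) (inl₁ x) = 0
        have h1 : (e.dualMap δ) (inl₁ x) = v (fst₀ (e (inl₁ x))) := rfl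
        have h2 : fst₀ (e (inl₁ x)) = dN x := by
          rw [heapp]
          show dN (inl₁ x).1 + τ (inl₁ x).2 = dN x
          have ha : (inl₁ x).1 = x := rfl
          have hb : (inl₁ x).2 = 0 := rfl
          rw [ha, hb, map_zero, add_zero]
        have h3 : γ (inl₁ x) = (dN.dualMap v) x := by rw [hv]; rfl
        rw [h1, h2, h3]
        show v (dN x) - v (dN x) = 0
        rw [sub_self]
      set β := γ' ∘ₗ inr₁ with hβdef
      have hfact : snd₁.dualMap β = γ' := by
        apply LinearMap.ext
        intro z
        show γ' (inr₁ z.2) = γ' z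
        have hz : z = inl₁ z.1 + inr₁ z.2 := by
          show z = ((z.1, 0) : (Fin a₁ → R) × (Fin b₁ → R)) + ((0, z.2) : _)
          rw [Prod.mk_add_mk, add_zero, zero_add]
        calc γ' (inr₁ z.2) = γ' (inl₁ z.1) + γ' (inr₁ z.2) := by rw [hγ'inl, zero_add]
        _ = γ' (inl₁ z.1 + inr₁ z.2) := by rw [map_add]
        _ = γ' z := by rw [← hz]
      refine ⟨Submodule.Quotient.mk β, ?_⟩
      rw [hjapp, hfact, hγ'def, Submodule.Quotient.eq]
      exact ⟨-δ, by rw [map_neg]; abel⟩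
    · rintro _ ⟨u, rfl⟩
      obtain ⟨β, rfl⟩ := Submodule.Quotient.mk_surjective _ u
      rw [LinearMap.mem_ker, hjapp, hgapp]
      have hzero : inl₁.dualMap (snd₁.dualMap β) = 0 := by
        apply LinearMap.ext
        intro x
        show β ((inl₁ x).2) = 0
        have hb : (inl₁ x).2 = 0 := rfl
        rw [hb, map_zero]
      rw [hzero]
      exact Submodule.Quotient.mk_zero _

  exact ⟨e, q, hq, hkq, j, g, hinj, hsurj, hkerg⟩


lemma myMemOfEquiv {X : Set (ModuleCat.{u} R)} (hX : IsResolving R X)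
    {M N : ModuleCat.{u} R} (hM : M ∈ X) (e : ↥N ≃ₗ[R] ↥M) : N ∈ X := by
  refine hX.2.2.1 M hM N ⟨e.toLinearMap, e.symm.toLinearMap, ?_⟩
  apply LinearMap.ext
  intro x
  simp

lemma myBaseCase [IsNoetherianRing R] [IsLocalRing R] {X : Set (ModuleCat.{u} R)}
    (hX : IsResolving R X) {M : Type u} [AddCommGroup M] [Module R M] [Subsingleton M]
    (T : ModuleCat.{u} R) (hT : IsTranspose R (ModuleCat.of R M) T) : T ∈ X := by
  haveI : Subsingleton ↥(ModuleCat.of R M) := ‹Subsingleton M›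
  obtain ⟨n₀, n₁, d, p, hp, hker, hm0, hm1, ⟨eT⟩⟩ := hT
  have h0 : Subsingleton (Fin n₀ → R) := by
    have hk : LinearMap.ker p = ⊤ := by
      rw [eq_top_iff]
      intro x _
      exact Subsingleton.elim _ _
    have htb : (⊤ : Submodule R (Fin n₀ → R)) = ⊥ :=
      Submodule.eq_bot_of_le_smul_of_le_jacobson_bot ((⊥ : Ideal R).jacobson) ⊤
        (Module.finite_def.mp inferInstance) (hk ▸ hm0) le_rfl
    refine ⟨fun a b => ?_⟩
    have ha : a ∈ (⊥ : Submodule R (Fin n₀ → R)) := htb ▸ Submodule.mem_top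
    have hb : b ∈ (⊥ : Submodule R (Fin n₀ → R)) := htb ▸ Submodule.mem_top
    rw [Submodule.mem_bot] at ha hb
    rw [ha, hb]
  have h1 : Subsingleton (Fin n₁ → R) := by
    have hk : LinearMap.ker d = ⊤ := by
      rw [eq_top_iff]
      intro x _
      exact Subsingleton.elim _ _
    have htb : (⊤ : Submodule R (Fin n₁ → R)) = ⊥ :=
      Submodule.eq_bot_of_le_smul_of_le_jacobson_bot ((⊥ : Ideal R).jacobson) ⊤
        (Module.finite_def.mp inferInstance) (hk ▸ hm1) le_rfl
    refine ⟨fun a b => ?_⟩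
    have ha : a ∈ (⊥ : Submodule R (Fin n₁ → R)) := htb ▸ Submodule.mem_top
    have hb : b ∈ (⊥ : Submodule R (Fin n₁ → R)) := htb ▸ Submodule.mem_top
    rw [Submodule.mem_bot] at ha hb
    rw [ha, hb]
  have h2 : Subsingleton (Module.Dual R (Fin n₁ → R)) :=
    ⟨fun f g => LinearMap.ext fun x => by rw [Subsingleton.elim x 0, map_zero, map_zero]⟩
  have h3 : Subsingleton (Module.Dual R (Fin n₁ → R) ⧸ LinearMap.range d.dualMap) := by
    refine ⟨fun a b => ?_⟩
    obtain ⟨x, rfl⟩ := Submodule.Quotient.mk_surjective _ a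
    obtain ⟨y, rfl⟩ := Submodule.Quotient.mk_surjective _ b
    rw [Subsingleton.elim x y]
  have h4 : Subsingleton ↥T := eT.toEquiv.subsingleton
  refine hX.2.2.1 (ModuleCat.of R R) hX.2.1 T ⟨0, 0, ?_⟩
  apply LinearMap.ext
  intro x
  exact Subsingleton.elim _ _

lemma myTransposeTransfer {M M' T : ModuleCat.{u} R} (h : IsTranspose R M T)
    (g : ↥M ≃ₗ[R] ↥M') : IsTranspose R M' T := by
  obtain ⟨n₀, n₁, d, p, hp, hker, hm0, hm1, he⟩ := h
  refine ⟨n₀, n₁, d, (g : ↥M →ₗ[R] ↥M') ∘ₗ p, g.surjective.comp hp, ?_, ?_, hm1, he⟩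
  · rw [LinearEquiv.ker_comp]
    exact hker
  · rw [LinearEquiv.ker_comp]
    exact hm0

end MyAux

/-- Let `(R,m,k)` be a Noetherian local ring of positive depth and `X`
a resolving subcategory of `mod R` containing the Auslander transpose `Tr k`. Then for
every finitely generated `R`-module `L` of finite length, `Tr L` belongs to `X`. -/
theorem transpose_finiteLength_mem_resolving
    (R : Type u) [CommRing R] [IsNoetherianRing R] [IsLocalRing R]
    (hdepth : 0 < mdepth R R)
    (X : Set (ModuleCat.{u} R)) (hX : IsResolving R X)
    (htrk : ∃ T : ModuleCat.{u} R,
      IsTranspose R (ModuleCat.of R (ResidueField R)) T ∧ T ∈ X) :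
    ∀ L : ModuleCat.{u} R, IsFiniteLength R ↥L →
      ∀ T : ModuleCat.{u} R, IsTranspose R L T → T ∈ X := by
  obtain ⟨r, hrm, hrreg⟩ := myRegularElem hdepth
  obtain ⟨Tk, hTk, hTkX⟩ := htrk
  have main : ∀ (M : Type u) [AddCommGroup M] [Module R M], IsFiniteLength R M →
      ∀ T : ModuleCat.{u} R, IsTranspose R (ModuleCat.of R M) T → T ∈ X := by
    intro M iAG iMod h
    induction h with
    | of_subsingleton =>
      intro T hT
      exact myBaseCase hX T hT
    | @of_simple_quotient M' _ _ N _ hN ih =>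
      intro T hT
      haveI : Module.Finite R ↥N := myFinLenFinite hN
      obtain ⟨a₀, a₁, dN, pN, hpN, hkN, hmN0, hmN1⟩ := myExistsMinimalPresentation (R := R) ↥N
      obtain ⟨eS⟩ := mySimpleEquivResidue (R := R) (M' ⧸ N)
      obtain ⟨b₀, b₁, dS, pS, hpS, hkS, hmS0, hmS1, ⟨eTk⟩⟩ := hTk
      have hpS' : Function.Surjective (eS.toLinearMap ∘ₗ pS) := eS.surjective.comp hpS
      have hkS' : LinearMap.ker (eS.toLinearMap ∘ₗ pS) = LinearMap.range dS := by
        rw [LinearEquiv.ker_comp]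
        exact hkS
      have hNdual : ∀ f : ↥N →ₗ[R] R, f = 0 := myDualZero hN r hrm hrreg
      obtain ⟨e, q, hq, hkq, hses⟩ := myHorseshoe N.subtype N.mkQ N.injective_subtype
        (Submodule.mkQ_surjective N) (by rw [Submodule.ker_mkQ, Submodule.range_subtype])
        hNdual dN pN hpN hkN dS (eS.toLinearMap ∘ₗ pS) hpS' hkS'
      have hTS : ModuleCat.of R (Module.Dual R (Fin b₁ → R) ⧸
          LinearMap.range dS.dualMap) ∈ X :=
        myMemOfEquiv hX hTkX eTk.symm
      have hTN : ModuleCat.of R (Module.Dual R (Fin a₁ → R) ⧸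
          LinearMap.range dN.dualMap) ∈ X := by
        apply ih
        exact ⟨a₀, a₁, dN, pN, hpN, hkN, hmN0, hmN1, ⟨LinearEquiv.refl R _⟩⟩
      have hC : ModuleCat.of R (Module.Dual R ((Fin a₁ → R) × (Fin b₁ → R)) ⧸
          LinearMap.range e.dualMap) ∈ X :=
        hX.2.2.2.1 _ _ _ hses hTS hTN
      obtain ⟨m₀, m₁, dL, pL, hpL, hkL, hmL0, hmL1, ⟨eT⟩⟩ := hT
      obtain ⟨i, pr, hpi⟩ := myTransposeSummand dL pL hpL hkL hmL0 hmL1 e q hq hkq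
      have hTmin : ModuleCat.of R (Module.Dual R (Fin m₁ → R) ⧸
          LinearMap.range dL.dualMap) ∈ X :=
        hX.2.2.1 _ hC _ ⟨i, pr, hpi⟩
      exact myMemOfEquiv hX hTmin eT
  intro L hL T hT
  exact main ↥L hL T (myTransposeTransfer (M' := ModuleCat.of R ↥L) hT (LinearEquiv.refl R ↥L))
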